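/- Unique decodability against B Byzantine corruptions: let F be a field, L, B positive naturals, N = L + 4B, and let f_1, …, f_L, α_1, …, α_N ∈ F be N + L pairwise distinct elements. Define φ : F^(L+2B) → F^N by φ(x)_n = Σ_{ℓ=1}^L x_ℓ·(f_ℓ − α_n)⁻¹ + Σ_{k=1}^{2B} x_{L+k}·α_n^{k−1}. If x, x' ∈ F^(L+2B) and e, e' ∈ F^N each have at most B nonzero coordinates, and φ(x) + e = φ(x') + e', then x = x' and e = e'. -/
import Mathlib

open Polynomial Finset

/-- The CSA (cross-subspace alignment) encoding map `φ : F^(L+2B) → F^N`, `N = L + 4B`: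
`φ(x)_n = Σ_{ℓ} x_ℓ (f_ℓ - α_n)⁻¹ + Σ_{k} x_{L+k} α_n^(k-1)`. -/
def csaEnc {F : Type*} [Field F] {L B : ℕ} (f : Fin L → F) (α : Fin (L + 4*B) → F)
    (x : Fin L ⊕ Fin (2*B) → F) (n : Fin (L + 4*B)) : F :=
  ∑ ℓ : Fin L, x (Sum.inl ℓ) * (f ℓ - α n)⁻¹ +
  ∑ k : Fin (2*B), x (Sum.inr k) * α n ^ (k : ℕ)

lemma natDegree_C_sub_X {F : Type*} [Field F] (a : F) : (C a - X).natDegree = 1 := by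
  have h : (C a - X) = -(X - C a) := by ring
  rw [h, natDegree_neg, natDegree_X_sub_C]

/-- **Unique decodability against `B` Byzantine corruptions.**  With `N = L + 4B` and the
`N + L` evaluation points pairwise distinct, if two codewords are corrupted by error vectors
supported on at most `B` coordinates each and the corrupted words agree, then the data and
the error vectors agree. -/
theorem csa_unique_decoding
    (F : Type*) [Field F] [DecidableEq F] (L B : ℕ) (hL : 0 < L) (hB : 0 < B)
    (f : Fin L → F) (α : Fin (L + 4*B) → F)
    (hdist : Function.Injective (Sum.elim f α))
    (x x' : Fin L ⊕ Fin (2*B) → F) (e e' : Fin (L + 4*B) → F)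
    (he : (Finset.univ.filter fun n => e n ≠ 0).card ≤ B)
    (he' : (Finset.univ.filter fun n => e' n ≠ 0).card ≤ B)
    (heq : csaEnc f α x + e = csaEnc f α x' + e') :
    x = x' ∧ e = e' := by
  classical
  have hf_inj : Function.Injective f := fun a b h => by
    have := hdist (a₁ := Sum.inl a) (a₂ := Sum.inl b) (by simpa using h)
    simpa using this
  have hα_inj : Function.Injective α := fun a b h => by
    have := hdist (a₁ := Sum.inr a) (a₂ := Sum.inr b) (by simpa using h)
    simpa using this
  have hfα : ∀ ℓ n, f ℓ - α n ≠ 0 := by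
    intro ℓ n h
    have h2 : Sum.elim f α (Sum.inl ℓ) = Sum.elim f α (Sum.inr n) := by
      simpa [sub_eq_zero] using h
    simpa using hdist h2
  set y : Fin L ⊕ Fin (2*B) → F := fun i => x i - x' i with hy
  have henc : ∀ n, csaEnc f α y n = e' n - e n := by
    intro n
    have h := congrFun heq n
    simp only [Pi.add_apply] at h
    have h2 : csaEnc f α y n = csaEnc f α x n - csaEnc f α x' n := by
      simp only [csaEnc, hy, sub_mul, Finset.sum_sub_distrib]
      ring
    rw [h2]; linear_combination h
  -- support counting
  set T : Finset (Fin (L + 4*B)) := univ.filter (fun n => csaEnc f α y n = 0) with hT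
  have hbad : (univ.filter fun n => csaEnc f α y n ≠ 0).card ≤ 2*B := by
    have hsub : (univ.filter fun n => csaEnc f α y n ≠ 0) ⊆
        (univ.filter fun n => e n ≠ 0) ∪ (univ.filter fun n => e' n ≠ 0) := by
      intro n hn
      simp only [mem_filter, mem_univ, true_and] at hn
      rw [henc n] at hn
      simp only [mem_union, mem_filter, mem_univ, true_and]
      by_contra hc
      push_neg at hc
      exact hn (by rw [hc.1, hc.2]; ring)
    calc (univ.filter fun n => csaEnc f α y n ≠ 0).card
        ≤ ((univ.filter fun n => e n ≠ 0) ∪ (univ.filter fun n => e' n ≠ 0)).card :=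
          Finset.card_le_card hsub
      _ ≤ _ + _ := Finset.card_union_le _ _
      _ ≤ 2*B := by omega
  have hTcard : L + 2*B ≤ T.card := by
    have hsplit := Finset.card_filter_add_card_filter_not
      (s := (univ : Finset (Fin (L + 4*B)))) (p := fun n => csaEnc f α y n = 0)
    simp only [Finset.card_univ, Fintype.card_fin] at hsplit
    have : (univ.filter fun n => ¬ csaEnc f α y n = 0) =
        (univ.filter fun n => csaEnc f α y n ≠ 0) := rfl
    rw [this] at hsplit
    rw [hT, hT] at *
    omega
  -- polynomials
  set Pi0 : F[X] := ∏ j : Fin L, (C (f j) - X) with hPi0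
  set Pe : Fin L → F[X] := fun ℓ => ∏ j ∈ univ.erase ℓ, (C (f j) - X) with hPe
  set Q : F[X] := ∑ k : Fin (2*B), C (y (Sum.inr k)) * X ^ (k : ℕ) with hQdef
  set P : F[X] := (∑ ℓ : Fin L, C (y (Sum.inl ℓ)) * Pe ℓ) + Q * Pi0 with hPdef
  have heval : ∀ n, P.eval (α n) = csaEnc f α y n * ∏ j : Fin L, (f j - α n) := by
    intro n
    simp only [hPdef, hQdef, hPe, hPi0, eval_add, eval_mul, eval_finset_sum, eval_prod,
      eval_C, eval_X, eval_pow, eval_sub]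
    rw [csaEnc, add_mul]
    congr 1
    rw [Finset.sum_mul]
    apply Finset.sum_congr rfl
    intro ℓ _
    have hp : ∏ j : Fin L, (f j - α n)
        = (f ℓ - α n) * ∏ j ∈ univ.erase ℓ, (f j - α n) :=
      (Finset.mul_prod_erase _ _ (mem_univ ℓ)).symm
    rw [hp]
    calc y (Sum.inl ℓ) * ∏ j ∈ univ.erase ℓ, (f j - α n)
        = y (Sum.inl ℓ) * (1 * ∏ j ∈ univ.erase ℓ, (f j - α n)) := by ring
      _ = y (Sum.inl ℓ) * (f ℓ - α n)⁻¹ * ((f ℓ - α n) * ∏ j ∈ univ.erase ℓ, (f j - α n)) := by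
          rw [← inv_mul_cancel₀ (hfα ℓ n)]; ring
  -- degree bound
  have hdegPi0 : Pi0.natDegree ≤ L := by
    refine le_trans (natDegree_prod_le _ _) (le_of_eq ?_)
    calc (∑ j : Fin L, (C (f j) - X).natDegree) = ∑ j : Fin L, 1 := by
          apply Finset.sum_congr rfl; intro j _; rw [natDegree_C_sub_X]
      _ = L := by simp
  have hdegPe : ∀ ℓ, (Pe ℓ).natDegree ≤ L - 1 := by
    intro ℓ
    refine le_trans (natDegree_prod_le _ _) ?_
    calc (∑ j ∈ univ.erase ℓ, (C (f j) - X).natDegree)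
        = ∑ j ∈ univ.erase ℓ, 1 := by
          apply Finset.sum_congr rfl; intro j _; rw [natDegree_C_sub_X]
      _ = (univ.erase ℓ).card := by simp
      _ ≤ L - 1 := by
          rw [Finset.card_erase_of_mem (mem_univ ℓ)]
          simp
  have hdegQ : Q.natDegree ≤ 2*B - 1 := by
    apply natDegree_sum_le_of_forall_le
    intro k _
    refine le_trans (natDegree_C_mul_le _ _) ?_
    rw [natDegree_X_pow]
    omega
  have hdegP : P.natDegree < L + 2*B := by
    refine lt_of_le_of_lt (natDegree_add_le _ _) ?_
    rw [max_lt_iff]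
    constructor
    · refine lt_of_le_of_lt (natDegree_sum_le_of_forall_le _ _ (n := L - 1) ?_) (by omega)
      intro ℓ _
      exact le_trans (natDegree_C_mul_le _ _) (hdegPe ℓ)
    · refine lt_of_le_of_lt (natDegree_mul_le) ?_
      omega
  -- P = 0
  have hP0 : P = 0 := by
    apply eq_zero_of_natDegree_lt_card_of_eval_eq_zero' P (T.image α)
    · intro a ha
      obtain ⟨n, hn, rfl⟩ := Finset.mem_image.mp ha
      rw [heval n]
      simp only [hT, mem_filter] at hn
      rw [hn.2, zero_mul]
    · rw [Finset.card_image_of_injective _ hα_inj]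
      omega
  -- y (inl ℓ) = 0
  have hyl : ∀ ℓ, y (Sum.inl ℓ) = 0 := by
    intro ℓ
    have h0 : P.eval (f ℓ) = 0 := by rw [hP0]; simp
    have hval : P.eval (f ℓ) = y (Sum.inl ℓ) * ∏ j ∈ univ.erase ℓ, (f j - f ℓ) := by
      simp only [hPdef, hQdef, hPe, hPi0, eval_add, eval_mul, eval_finset_sum, eval_prod,
        eval_C, eval_X, eval_pow, eval_sub]
      have hz : (∏ j : Fin L, (f j - f ℓ)) = 0 :=
        Finset.prod_eq_zero (mem_univ ℓ) (by simp)
      rw [hz, mul_zero, add_zero]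
      rw [Finset.sum_eq_single ℓ]
      · intro b _ hb
        have : (∏ j ∈ univ.erase b, (f j - f ℓ)) = 0 :=
          Finset.prod_eq_zero (Finset.mem_erase.mpr ⟨fun h => hb h.symm, mem_univ ℓ⟩)
            (by simp)
        rw [this, mul_zero]
      · simp
    have hne : (∏ j ∈ univ.erase ℓ, (f j - f ℓ)) ≠ 0 := by
      rw [Finset.prod_ne_zero_iff]
      intro j hj
      refine sub_ne_zero.mpr fun h => ?_
      exact (Finset.mem_erase.mp hj).1 (hf_inj h)
    rw [hval] at h0
    rcases mul_eq_zero.mp h0 with h | h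
    · exact h
    · exact absurd h hne
  -- Q = 0
  have hQ0 : Q = 0 := by
    have hs : (∑ ℓ : Fin L, C (y (Sum.inl ℓ)) * Pe ℓ) = 0 := by
      apply Finset.sum_eq_zero
      intro ℓ _
      rw [hyl ℓ, map_zero, zero_mul]
    have hQPi0 : Q * Pi0 = 0 := by
      have := hP0
      rw [hPdef, hs, zero_add] at this
      exact this
    have hPi0ne : Pi0 ≠ 0 := by
      rw [hPi0, Finset.prod_ne_zero_iff]
      intro j _ h
      have := congrArg natDegree h
      rw [natDegree_C_sub_X, natDegree_zero] at this
      exact one_ne_zero this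
    rcases mul_eq_zero.mp hQPi0 with h | h
    · exact h
    · exact absurd h hPi0ne
  have hyr : ∀ k, y (Sum.inr k) = 0 := by
    intro k
    have h : Q.coeff (k : ℕ) = 0 := by rw [hQ0]; simp
    rw [hQdef] at h
    rw [finset_sum_coeff] at h
    simp only [coeff_C_mul, coeff_X_pow] at h
    rw [Finset.sum_eq_single k] at h
    · simpa using h
    · intro b _ hbk
      rw [if_neg (fun hh => hbk (Fin.ext hh.symm)), mul_zero]
    · simp
  have hyzero : ∀ i, y i = 0 := by rintro (ℓ | k); exacts [hyl ℓ, hyr k]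
  have hxx : x = x' := by
    funext i
    have := hyzero i
    simp only [hy] at this
    exact sub_eq_zero.mp this
  refine ⟨hxx, ?_⟩
  funext n
  have h := henc n
  have hz : csaEnc f α y n = 0 := by
    simp [csaEnc, hyzero]
  rw [hz] at h
  exact (sub_eq_zero.mp h.symm).symm
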